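/- Let ρ be the uniform probability measure on [a,b] with a < b, α > n−1, β > 0, and let X = (X_1,...,X_n) be distributed according to the jellium Gibbs measure P_n with background αρ. Then the law of the order statistics (X_{(n)},...,X_{(1)}) conditioned on the event {X_1,...,X_n} ⊂ [a,b] equals the law of (Y_n,...,Y_1) conditioned on a ≤ Y_n ≤ ... ≤ Y_1 ≤ b, where Y_1,...,Y_n are independent Gaussian random variables with mean E[Y_k] = (a+b)/2 + ((b−a)/(2α))(n+1−2k) and variance (b−a)/(αβ). -/

import Mathlib

open MeasureTheory ProbabilityTheory Filter Real Set
open scoped ENNReal NNReal BigOperators ProbabilityTheory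

noncomputable section

/-- Sum over pairs `i < j` of `|x i - x j|`. -/
def pairSum (n : ℕ) (x : Fin n → ℝ) : ℝ :=
  ∑ p ∈ Finset.univ.filter (fun p : Fin n × Fin n => p.1 < p.2), |x p.1 - x p.2|

/-- Coulomb potential generated by a background with density `ρ`. -/
def coulombU (ρ : ℝ → ℝ) (x : ℝ) : ℝ := -∫ y, |x - y| / 2 * ρ y

/-- Jellium energy with background of total charge `α` smeared along the density `ρ`. -/
def jelliumH (n : ℕ) (α : ℝ) (ρ : ℝ → ℝ) (x : Fin n → ℝ) : ℝ :=
  -(1 / 2) * pairSum n x - α * ∑ i, coulombU ρ (x i)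

/-- The jellium Gibbs measure `P_n = exp(−β H_n) dx / Z_n` on `ℝⁿ`. -/
def gibbs (n : ℕ) (β : ℝ) (Hn : (Fin n → ℝ) → ℝ) : Measure (Fin n → ℝ) :=
  (∫⁻ x, ENNReal.ofReal (Real.exp (-β * Hn x)))⁻¹ •
    volume.withDensity fun x => ENNReal.ofReal (Real.exp (-β * Hn x))

/-- Non-decreasing rearrangement of a vector, i.e. the vector
`(x₍n₎, …, x₍₁₎)` of order statistics from the minimum to the maximum. -/
def sortAsc {n : ℕ} (x : Fin n → ℝ) : Fin n → ℝ := x ∘ Tuple.sort x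


lemma sortAsc_monotone {n : ℕ} (x : Fin n → ℝ) : Monotone (sortAsc x) :=
  Tuple.monotone_sort x

lemma sortAsc_perm {n : ℕ} (x : Fin n → ℝ) (σ : Equiv.Perm (Fin n)) :
    sortAsc (x ∘ σ) = sortAsc x :=
  Tuple.comp_perm_comp_sort_eq_comp_sort

lemma sortAsc_of_monotone {n : ℕ} {x : Fin n → ℝ} (hx : Monotone x) : sortAsc x = x := by
  have := (Tuple.comp_sort_eq_comp_iff_monotone (f := x) (σ := Equiv.refl _)).2 (by simpa using hx)
  simpa [sortAsc] using this.symm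

lemma sortAsc_le_iff {n : ℕ} (x : Fin n → ℝ) (j : Fin n) (t : ℝ) :
    sortAsc x j ≤ t ↔ ∃ s : Finset (Fin n), s.card = (j : ℕ) + 1 ∧ ∀ i ∈ s, x i ≤ t := by
  constructor
  · intro h
    refine ⟨(Finset.Iic j).image (Tuple.sort x), ?_, ?_⟩
    · rw [Finset.card_image_of_injective _ (Tuple.sort x).injective, Fin.card_Iic]
    · rintro i hi
      simp only [Finset.mem_image, Finset.mem_Iic] at hi
      obtain ⟨k, hk, rfl⟩ := hi
      exact le_trans (sortAsc_monotone x hk) h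
  · rintro ⟨s, hcard, hs⟩
    have hs' : ((s.image (Tuple.sort x).symm).filter (fun k => j ≤ k)).Nonempty := by
      by_contra hcon
      rw [Finset.not_nonempty_iff_eq_empty, Finset.filter_eq_empty_iff] at hcon
      have hsub : s.image (Tuple.sort x).symm ⊆ Finset.Iio j := by
        intro k hk
        simp only [Finset.mem_Iio]
        exact lt_of_not_ge (hcon hk)
      have := Finset.card_le_card hsub
      rw [Finset.card_image_of_injective _ (Tuple.sort x).symm.injective, hcard, Fin.card_Iio]
        at this
      omega
    obtain ⟨k, hk⟩ := hs'
    simp only [Finset.mem_filter, Finset.mem_image] at hk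
    obtain ⟨⟨i, hi, hik⟩, hjk⟩ := hk
    calc sortAsc x j ≤ sortAsc x k := sortAsc_monotone x hjk
    _ = x i := by rw [sortAsc, Function.comp_apply, ← hik]; simp
    _ ≤ t := hs i hi

lemma measurable_sortAsc {n : ℕ} : Measurable (sortAsc (n := n)) := by
  refine measurable_pi_lambda _ fun j => measurable_of_Iic fun t => ?_
  have : (fun x : Fin n → ℝ => sortAsc x j) ⁻¹' Iic t =
      ⋃ (s : Finset (Fin n)) (_ : s.card = (j : ℕ) + 1), {x | ∀ i ∈ s, x i ≤ t} := by
    ext x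
    simp only [mem_preimage, mem_Iic, mem_iUnion, mem_setOf_eq, sortAsc_le_iff]; exact exists_congr fun s => exists_prop.symm
  rw [this]
  refine MeasurableSet.iUnion fun s => MeasurableSet.iUnion fun _ => ?_
  have : {x : Fin n → ℝ | ∀ i ∈ s, x i ≤ t} = ⋂ i ∈ s, {x | x i ≤ t} := by ext; simp
  rw [this]
  exact MeasurableSet.biInter s.countable_toSet fun i _ =>
    measurableSet_le (measurable_pi_apply i) measurable_const

lemma sum_pairs_split {n : ℕ} (f g : Fin n → ℝ) :
    ∑ p ∈ Finset.univ.filter (fun p : Fin n × Fin n => p.1 < p.2), (f p.1 + g p.2) =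
      ∑ k, ((Finset.Ioi k).card : ℝ) * f k + ∑ k, ((Finset.Iio k).card : ℝ) * g k := by
  rw [Finset.sum_filter]
  have h1 : ∀ p : Fin n × Fin n, (if p.1 < p.2 then f p.1 + g p.2 else 0) =
      (if p.1 < p.2 then f p.1 else 0) + (if p.1 < p.2 then g p.2 else 0) := by
    intro p; by_cases h : p.1 < p.2 <;> simp [h]
  simp_rw [h1, Finset.sum_add_distrib]
  congr 1
  · rw [Fintype.sum_prod_type]
    refine Finset.sum_congr rfl fun i _ => ?_
    rw [← Finset.sum_filter]
    have : Finset.univ.filter (fun j => i < j) = Finset.Ioi i := by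
      ext j; simp
    rw [this]; simp [Finset.sum_const, nsmul_eq_mul, mul_comm]
  · rw [Fintype.sum_prod_type_right]
    refine Finset.sum_congr rfl fun j _ => ?_
    rw [← Finset.sum_filter]
    have : Finset.univ.filter (fun i => i < j) = Finset.Iio j := by
      ext i; simp
    rw [this]; simp [Finset.sum_const, nsmul_eq_mul, mul_comm]

lemma pairSum_le {n : ℕ} (x : Fin n → ℝ) (c : ℝ) :
    pairSum n x ≤ ((n : ℝ) - 1) * ∑ i, |x i - c| := by
  have h1 : pairSum n x ≤
      ∑ p ∈ Finset.univ.filter (fun p : Fin n × Fin n => p.1 < p.2),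
        (|x p.1 - c| + |x p.2 - c|) := by
    refine Finset.sum_le_sum fun p _ => ?_
    calc |x p.1 - x p.2| = |(x p.1 - c) - (x p.2 - c)| := by ring_nf
    _ ≤ |x p.1 - c| + |x p.2 - c| := abs_sub _ _
  refine h1.trans ?_
  rw [sum_pairs_split (fun k => |x k - c|) (fun k => |x k - c|)]
  rw [← Finset.sum_add_distrib, Finset.mul_sum]
  refine le_of_eq (Finset.sum_congr rfl fun k _ => ?_)
  rw [Fin.card_Ioi, Fin.card_Iio, ← add_mul]
  have hk : (k : ℕ) < n := k.isLt
  have : ((n - 1 - (k : ℕ) : ℕ) : ℝ) + ((k : ℕ) : ℝ) = (n : ℝ) - 1 := by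
    have h2 : (n - 1 - (k : ℕ) : ℕ) + (k : ℕ) = n - 1 := by omega
    have := congrArg (fun m : ℕ => (m : ℝ)) h2
    push_cast at this ⊢
    rw [this]
    have : (1:ℝ) ≤ (n:ℝ) := by exact_mod_cast Nat.one_le_iff_ne_zero.2 (by omega)
    rw [Nat.cast_sub (by omega)]
    simp
  rw [this]

lemma pairSum_monotone {n : ℕ} {y : Fin n → ℝ} (hy : Monotone y) :
    pairSum n y = ∑ k : Fin n, (2 * ((k : ℕ) : ℝ) + 1 - (n : ℝ)) * y k := by
  have h1 : pairSum n y =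
      ∑ p ∈ Finset.univ.filter (fun p : Fin n × Fin n => p.1 < p.2),
        ((-y) p.1 + y p.2) := by
    refine Finset.sum_congr rfl fun p hp => ?_
    simp only [Finset.mem_filter] at hp
    have := hy hp.2.le
    rw [abs_sub_comm, abs_of_nonneg (by linarith)]
    simp; ring
  rw [h1, sum_pairs_split, ← Finset.sum_add_distrib]
  refine Finset.sum_congr rfl fun k _ => ?_
  have hk : (k : ℕ) < n := k.isLt
  rw [Fin.card_Ioi, Fin.card_Iio]
  have h2 : ((n - 1 - (k : ℕ) : ℕ) : ℝ) = (n : ℝ) - 1 - (k : ℕ) := by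
    rw [Nat.cast_sub (by omega), Nat.cast_sub (by omega)]
    simp
  rw [h2]
  simp only [Pi.neg_apply]
  ring

lemma pairSum_perm {n : ℕ} (x : Fin n → ℝ) (σ : Equiv.Perm (Fin n)) :
    pairSum n (x ∘ σ) = pairSum n x := by
  have key : ∀ z : Fin n → ℝ, ∑ p : Fin n × Fin n, |z p.1 - z p.2| = 2 * pairSum n z := by
    intro z
    have hsplit := Finset.sum_filter_add_sum_filter_not Finset.univ
      (fun p : Fin n × Fin n => p.1 < p.2) (fun p => |z p.1 - z p.2|)
    have h2 : ∑ p ∈ Finset.univ.filter (fun p : Fin n × Fin n => ¬ p.1 < p.2),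
        |z p.1 - z p.2| = pairSum n z := by
      rw [← Finset.sum_filter_add_sum_filter_not
        (Finset.univ.filter (fun p : Fin n × Fin n => ¬ p.1 < p.2))
        (fun p => p.2 < p.1) (fun p => |z p.1 - z p.2|)]
      have hz : ∑ p ∈ (Finset.univ.filter (fun p : Fin n × Fin n => ¬ p.1 < p.2)).filter
          (fun p => ¬ p.2 < p.1), |z p.1 - z p.2| = 0 := by
        refine Finset.sum_eq_zero fun p hp => ?_
        simp only [Finset.mem_filter] at hp
        have : p.1 = p.2 := le_antisymm (not_lt.1 hp.2) (not_lt.1 hp.1.2)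
        rw [this]; simp
      rw [hz, add_zero]
      refine Finset.sum_nbij' (fun p => (p.2, p.1)) (fun p => (p.2, p.1)) ?_ ?_ ?_ ?_ ?_
      · intro p hp; simp only [Finset.mem_filter] at hp ⊢; exact ⟨Finset.mem_univ _, hp.2⟩
      · intro p hp; simp only [Finset.mem_filter] at hp ⊢
        exact ⟨⟨Finset.mem_univ _, not_lt.2 hp.2.le⟩, hp.2⟩
      · intro p _; rfl
      · intro p _; rfl
      · intro p _; exact abs_sub_comm _ _
    calc ∑ p : Fin n × Fin n, |z p.1 - z p.2| = pairSum n z + pairSum n z := by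
          rw [← hsplit, h2]; rfl
    _ = 2 * pairSum n z := by ring
  have e : ∑ p : Fin n × Fin n, |(x ∘ σ) p.1 - (x ∘ σ) p.2| =
      ∑ p : Fin n × Fin n, |x p.1 - x p.2| :=
    Fintype.sum_equiv (σ.prodCongr σ) _ _ (fun p => rfl)
  have := key (x ∘ σ)
  rw [e, key x] at this
  linarith

lemma hasDerivAt_mul_abs (t : ℝ) : HasDerivAt (fun s : ℝ => s * |s| / 2) |t| t := by
  rcases lt_trichotomy t 0 with ht | rfl | ht
  · have h : HasDerivAt (fun s : ℝ => -(s ^ 2 / 2)) (-t) t := by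
      simpa [Pi.neg_def] using ((hasDerivAt_pow 2 t).div_const 2).neg
    have he : (fun s : ℝ => s * |s| / 2) =ᶠ[nhds t] fun s => -(s ^ 2 / 2) := by
      filter_upwards [IsOpen.mem_nhds isOpen_Iio ht] with s hs
      rw [abs_of_neg hs]; ring
    rw [abs_of_neg ht]
    exact h.congr_of_eventuallyEq he
  · rw [hasDerivAt_iff_tendsto_slope]
    have he : (fun s : ℝ => |s| / 2) =ᶠ[nhdsWithin 0 {(0:ℝ)}ᶜ] slope (fun s : ℝ => s * |s| / 2) 0 := by
      filter_upwards [self_mem_nhdsWithin] with s hs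
      have hs0 : s ≠ 0 := hs
      rw [slope_def_field]
      field_simp [hs0]
      ring
    have : Filter.Tendsto (fun s : ℝ => |s| / 2) (nhdsWithin 0 {(0:ℝ)}ᶜ) (nhds (|(0:ℝ)| / 2)) := by
      exact (continuous_abs.div_const 2).continuousAt.continuousWithinAt.tendsto
    simpa using this.congr' he
  · have h : HasDerivAt (fun s : ℝ => s ^ 2 / 2) t t := by
      simpa using (hasDerivAt_pow 2 t).div_const 2
    have he : (fun s : ℝ => s * |s| / 2) =ᶠ[nhds t] fun s => s ^ 2 / 2 := by
      filter_upwards [IsOpen.mem_nhds isOpen_Ioi ht] with s hs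
      rw [abs_of_pos hs]; ring
    rw [abs_of_pos ht]
    exact h.congr_of_eventuallyEq he

lemma integral_abs_sub (x a b : ℝ) (hab : a ≤ b) :
    ∫ y in a..b, |x - y| = ((b - x) * |b - x| + (x - a) * |x - a|) / 2 := by
  have key : ∫ y in a..b, |y - x| =
      (b - x) * |b - x| / 2 - (a - x) * |a - x| / 2 := by
    have hd : ∀ t ∈ uIcc a b, HasDerivAt (fun s : ℝ => (s - x) * |s - x| / 2) |t - x| t := by
      intro t _
      have := (hasDerivAt_mul_abs (t - x)).comp t ((hasDerivAt_id t).sub_const x)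
      simpa [Function.comp_def] using this
    have hint : IntervalIntegrable (fun t : ℝ => |t - x|) volume a b :=
      (continuous_abs.comp (continuous_id.sub continuous_const)).intervalIntegrable a b
    simpa using intervalIntegral.integral_eq_sub_of_hasDerivAt hd hint
  have hcg : ∫ y in a..b, |x - y| = ∫ y in a..b, |y - x| :=
    intervalIntegral.integral_congr fun y _ => abs_sub_comm x y
  rw [hcg, key]
  have h1 : (a - x) * |a - x| = -((x - a) * |x - a|) := by
    rw [show a - x = -(x - a) by ring, abs_neg]; ring
  rw [h1]
  generalize |b - x| = v
  generalize |x - a| = u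
  ring

lemma coulombU_eq {a b : ℝ} (hab : a < b) :
    coulombU (Set.indicator (Set.Icc a b) fun _ => 1 / (b - a)) =
      fun x => -(((x - a) * |x - a| + (b - x) * |b - x|) / (4 * (b - a))) := by
  funext x
  have hba : (0:ℝ) < b - a := by linarith
  rw [coulombU]
  have h1 : ∀ y : ℝ, |x - y| / 2 * Set.indicator (Set.Icc a b) (fun _ => 1 / (b - a)) y =
      Set.indicator (Set.Icc a b) (fun y => |x - y| * (2 * (b - a))⁻¹) y := by
    intro y
    by_cases hy : y ∈ Set.Icc a b
    · rw [Set.indicator_of_mem hy, Set.indicator_of_mem hy]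
      field_simp
    · rw [Set.indicator_of_notMem hy, Set.indicator_of_notMem hy, mul_zero]
  simp_rw [h1]
  rw [MeasureTheory.integral_indicator measurableSet_Icc]
  rw [MeasureTheory.integral_mul_const]
  rw [MeasureTheory.integral_Icc_eq_integral_Ioc,
    ← intervalIntegral.integral_of_le hab.le]
  rw [integral_abs_sub x a b hab.le]
  field_simp
  ring

lemma lintegral_pi_prod : ∀ (n : ℕ) (μ : Fin n → Measure ℝ), (∀ i, SigmaFinite (μ i)) →
    ∀ (f : Fin n → ℝ → ℝ≥0∞), (∀ i, Measurable (f i)) →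
    ∫⁻ x, ∏ i, f i (x i) ∂Measure.pi μ = ∏ i, ∫⁻ y, f i y ∂μ i := by
  intro n
  induction n with
  | zero =>
    intro μ _ f _
    rw [Measure.pi_of_empty]
    simp
  | succ m ih =>
    intro μ hsf f hf
    haveI := hsf
    have hmp := measurePreserving_piFinSuccAbove μ 0
    set e := MeasurableEquiv.piFinSuccAbove (fun _ : Fin (m + 1) => ℝ) 0 with he
    have hg : ∀ x : Fin (m + 1) → ℝ,
        ∏ i, f i (x i) = f 0 (e x).1 * ∏ j : Fin m, f (Fin.succAbove 0 j) ((e x).2 j) := by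
      intro x
      rw [Fin.prod_univ_succ]
      congr 1
    calc ∫⁻ x, ∏ i, f i (x i) ∂Measure.pi μ
        = ∫⁻ x, (fun z : ℝ × (Fin m → ℝ) =>
            f 0 z.1 * ∏ j : Fin m, f (Fin.succAbove 0 j) (z.2 j)) (e x) ∂Measure.pi μ := by
          exact lintegral_congr fun x => hg x
      _ = ∫⁻ z, f 0 z.1 * ∏ j : Fin m, f (Fin.succAbove 0 j) (z.2 j)
            ∂((μ 0).prod (Measure.pi fun j => μ (Fin.succAbove 0 j))) := by
          rw [← hmp.lintegral_comp]
          exact ((hf 0).comp measurable_fst).mul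
            (Finset.measurable_prod _ fun j _ =>
              (hf _).comp ((measurable_pi_apply j).comp measurable_snd))
      _ = (∫⁻ y, f 0 y ∂μ 0) * ∏ j : Fin m, ∫⁻ y, f (Fin.succAbove 0 j) y ∂μ (Fin.succAbove 0 j) := by
          rw [lintegral_prod_mul (f := fun y => f 0 y)
            (g := fun y : Fin m → ℝ => ∏ j : Fin m, f (Fin.succAbove 0 j) (y j))
            ((hf 0).aemeasurable)
            ((Finset.measurable_prod _ fun j _ =>
              (hf _).comp (measurable_pi_apply j)).aemeasurable)]
          rw [ih _ (fun j => hsf _) _ (fun j => hf _)]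
      _ = ∏ i, ∫⁻ y, f i y ∂μ i := by
          rw [Fin.prod_univ_succ]
          congr 1

lemma pi_withDensity {n : ℕ} (μ : Fin n → Measure ℝ) [hsf : ∀ i, SigmaFinite (μ i)]
    (f : Fin n → ℝ → ℝ≥0∞) (hf : ∀ i, Measurable (f i))
    (ν : Fin n → Measure ℝ) [∀ i, SigmaFinite (ν i)]
    (hν : ∀ i, ν i = (μ i).withDensity (f i)) :
    Measure.pi ν = (Measure.pi μ).withDensity fun x => ∏ i, f i (x i) := by
  refine Measure.pi_eq fun s hs => ?_
  rw [withDensity_apply _ (MeasurableSet.univ_pi hs)]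
  rw [← lintegral_indicator (MeasurableSet.univ_pi hs)]
  have hpt : (Set.univ.pi s).indicator (fun x => ∏ i, f i (x i)) =
      fun x => ∏ i, (s i).indicator (f i) (x i) := by
    funext x
    by_cases hx : x ∈ Set.univ.pi s
    · rw [Set.indicator_of_mem hx]
      exact Finset.prod_congr rfl fun i _ =>
        (Set.indicator_of_mem (hx i (Set.mem_univ i)) _).symm
    · rw [Set.indicator_of_notMem hx]
      have hx' : ∃ i, x i ∉ s i := by simpa [Set.mem_pi] using hx
      obtain ⟨i, hxi⟩ := hx'
      exact (Finset.prod_eq_zero (Finset.mem_univ i)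
        (Set.indicator_of_notMem hxi _)).symm
  rw [hpt, lintegral_pi_prod n μ hsf _ (fun i => (hf i).indicator (hs i))]
  exact Finset.prod_congr rfl fun i _ => by
    rw [lintegral_indicator (hs i), hν i, withDensity_apply _ (hs i)]

lemma measurePreserving_comp_perm {n : ℕ} (σ : Equiv.Perm (Fin n)) :
    MeasurePreserving (fun x : Fin n → ℝ => x ∘ σ) volume volume := by
  have key : (fun x : Fin n → ℝ => x ∘ σ) =
      ⇑(MeasurableEquiv.piCongrLeft (fun _ : Fin n => ℝ) σ.symm) := by
    funext x
    funext i
    have h1 : i = σ.symm (σ i) := (Equiv.symm_apply_apply σ i).symm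
    calc (x ∘ σ) i = x (σ i) := rfl
    _ = (MeasurableEquiv.piCongrLeft (fun _ : Fin n => ℝ) σ.symm) x (σ.symm (σ i)) :=
        (Equiv.piCongrLeft_apply_apply (fun _ : Fin n => ℝ) σ.symm x (σ i)).symm
    _ = (MeasurableEquiv.piCongrLeft (fun _ : Fin n => ℝ) σ.symm) x i := by rw [← h1]
  rw [key]
  have := measurePreserving_piCongrLeft (fun _ : Fin n => (volume : Measure ℝ)) σ.symm
  simpa [MeasureTheory.volume_pi] using this

lemma volume_eq_coords_null {n : ℕ} {i j : Fin n} (hij : i ≠ j) :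
    volume {x : Fin n → ℝ | x i = x j} = 0 := by
  cases n with
  | zero => exact i.elim0
  | succ m =>
    obtain ⟨k, hk⟩ := Fin.exists_succAbove_eq hij.symm
    have hmp := measurePreserving_piFinSuccAbove (fun _ : Fin (m+1) => (volume : Measure ℝ)) i
    set e := MeasurableEquiv.piFinSuccAbove (fun _ : Fin (m+1) => ℝ) i with he
    have hB : MeasurableSet {z : ℝ × (Fin m → ℝ) | z.1 = z.2 k} :=
      measurableSet_eq_fun measurable_fst ((measurable_pi_apply k).comp measurable_snd)
    have hpre : {x : Fin (m+1) → ℝ | x i = x j} = e ⁻¹' {z : ℝ × (Fin m → ℝ) | z.1 = z.2 k} := by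
      ext x
      simp only [Set.mem_setOf_eq, Set.mem_preimage]
      have : e x = (x i, fun j' => x (i.succAbove j')) := rfl
      rw [this]
      simp [hk]
    rw [MeasureTheory.volume_pi, hpre, hmp.measure_preimage hB.nullMeasurableSet]
    rw [Measure.prod_apply_symm hB]
    have : ∀ y : Fin m → ℝ, volume ((fun t : ℝ => (t, y)) ⁻¹' {z : ℝ × (Fin m → ℝ) | z.1 = z.2 k}) = 0 := by
      intro y
      have : ((fun t : ℝ => (t, y)) ⁻¹' {z : ℝ × (Fin m → ℝ) | z.1 = z.2 k}) = {y k} := by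
        ext t; simp
      rw [this]
      exact measure_singleton _
    simp only [this]
    simp

lemma volume_not_injective_null {n : ℕ} :
    volume {x : Fin n → ℝ | ¬ Function.Injective x} = 0 := by
  have hsub : {x : Fin n → ℝ | ¬ Function.Injective x} ⊆
      ⋃ (i : Fin n) (j : Fin n) (_ : i ≠ j), {x : Fin n → ℝ | x i = x j} := by
    intro x hx
    simp only [Set.mem_setOf_eq, Function.Injective] at hx
    push_neg at hx
    obtain ⟨i, j, hxij, hij⟩ := hx
    exact Set.mem_iUnion.2 ⟨i, Set.mem_iUnion.2 ⟨j, Set.mem_iUnion.2 ⟨hij, hxij⟩⟩⟩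
  refine measure_mono_null hsub ?_
  refine measure_iUnion_null fun i => measure_iUnion_null fun j => measure_iUnion_null fun hij =>
    volume_eq_coords_null hij

lemma integrable_exp_neg_abs {κ : ℝ} (hκ : 0 < κ) (c : ℝ) :
    Integrable (fun t : ℝ => rexp (-κ * |t - c|)) volume := by
  have h1 : IntegrableOn (fun t : ℝ => rexp (-κ * t)) (Ici (0:ℝ)) volume :=
    (integrableOn_Ici_iff_integrableOn_Ioi).2 (exp_neg_integrableOn_Ioi 0 hκ)
  have hind1 : Integrable ((Ici (0:ℝ)).indicator fun t => rexp (-κ * t)) volume :=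
    h1.integrable_indicator measurableSet_Ici
  have hind2 : Integrable ((Iio (0:ℝ)).indicator fun t => rexp (κ * t)) volume := by
    have h2 : IntegrableOn (fun t : ℝ => rexp (-κ * t)) (Ioi (0:ℝ)) volume :=
      exp_neg_integrableOn_Ioi 0 hκ
    have h3 := (h2.integrable_indicator measurableSet_Ioi).comp_neg
    refine h3.congr (Filter.Eventually.of_forall fun t => ?_)
    simp only [Set.indicator_apply, Set.mem_Ioi, Set.mem_Iio]
    by_cases ht : t < 0
    · rw [if_pos (by linarith), if_pos ht]
      ring_nf
    · rw [if_neg (by simp; linarith), if_neg (by simpa using ht)]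
  have key : Integrable (fun t : ℝ => rexp (-κ * |t|)) volume := by
    have : (fun t : ℝ => rexp (-κ * |t|)) =
        ((Ici (0:ℝ)).indicator fun t => rexp (-κ * t)) +
        ((Iio (0:ℝ)).indicator fun t => rexp (κ * t)) := by
      funext t
      by_cases ht : 0 ≤ t
      · rw [Pi.add_apply, Set.indicator_of_mem (by simpa using ht),
          Set.indicator_of_notMem (by simpa using ht), abs_of_nonneg ht, add_zero]
      · rw [Pi.add_apply, Set.indicator_of_notMem (by simpa using ht),
          Set.indicator_of_mem (by simpa using not_le.1 ht), abs_of_neg (not_le.1 ht),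
          zero_add, mul_neg, neg_mul, neg_neg]
    rw [this]
    exact hind1.add hind2
  simpa using key.comp_sub_right c

def Ufun (a b x : ℝ) : ℝ := -(((x - a) * |x - a| + (b - x) * |b - x|) / (4 * (b - a)))

lemma Ufun_le {a b : ℝ} (hab : a < b) (t : ℝ) :
    Ufun a b t ≤ -(|t - (a + b) / 2| / 2) + (b - a) / 8 := by
  rw [Ufun]
  rcases le_or_gt t a with hta | hta
  · rw [abs_of_nonpos (by linarith), abs_of_nonneg (by linarith),
      abs_of_nonpos (by linarith : t - (a + b) / 2 ≤ 0)]
    have h4 : (0:ℝ) < 4 * (b - a) := by linarith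
    rw [neg_le, le_div_iff₀ h4]
    nlinarith [mul_nonneg (by linarith : (0:ℝ) ≤ b - a) (by linarith : (0:ℝ) ≤ (a+b)/2 - t)]
  · rcases le_or_gt b t with htb | htb
    · rw [abs_of_nonneg (by linarith), abs_of_nonpos (by linarith),
        abs_of_nonneg (by linarith : 0 ≤ t - (a + b) / 2)]
      have h4 : (0:ℝ) < 4 * (b - a) := by linarith
      rw [neg_le, le_div_iff₀ h4]
      nlinarith [mul_nonneg (by linarith : (0:ℝ) ≤ b - a) (by linarith : (0:ℝ) ≤ t - (a+b)/2)]
    · rw [abs_of_nonneg (by linarith), abs_of_nonneg (by linarith)]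
      have h4 : (0:ℝ) < 4 * (b - a) := by linarith
      rw [neg_le, le_div_iff₀ h4]
      nlinarith [sq_nonneg (|t - (a + b) / 2| - (b - a) / 2), sq_abs (t - (a + b) / 2),
        abs_nonneg (t - (a + b) / 2)]

lemma Z_lt_top {n : ℕ} {a b α β : ℝ} (hab : a < b) (hα : (n : ℝ) - 1 < α) (hα0 : 0 < α)
    (hβ : 0 < β) :
    ∫⁻ x : Fin n → ℝ,
      ENNReal.ofReal (rexp (-β * (-(1/2) * pairSum n x - α * ∑ i, Ufun a b (x i)))) < ∞ := by
  set c := (a + b) / 2 with hc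
  set κ := β * (α - ((n : ℝ) - 1)) / 2 with hκdef
  have hκ : 0 < κ := by
    rw [hκdef]
    have : 0 < α - ((n:ℝ) - 1) := by linarith
    positivity
  set K := α * β * n * (b - a) / 8 with hK
  have hpt : ∀ x : Fin n → ℝ,
      -β * (-(1/2) * pairSum n x - α * ∑ i, Ufun a b (x i)) ≤
        K + ∑ i, (-κ * |x i - c|) := by
    intro x
    have hps := pairSum_le x c
    have hUsum : ∑ i, Ufun a b (x i) ≤ -(1/2) * ∑ i, |x i - c| + n * ((b - a) / 8) := by
      have h1 : ∑ i, Ufun a b (x i) ≤ ∑ i : Fin n, (-(|x i - c| / 2) + (b - a) / 8) :=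
        Finset.sum_le_sum fun i _ => Ufun_le hab (x i)
      have h2 : ∑ i : Fin n, (-(|x i - c| / 2) + (b - a) / 8) =
          -(1/2) * ∑ i, |x i - c| + n * ((b - a) / 8) := by
        rw [Finset.sum_add_distrib, Finset.sum_const, Finset.card_univ, Fintype.card_fin,
          nsmul_eq_mul]
        have hterm : ∀ i : Fin n, -(|x i - c| / 2) = (-(1/2) : ℝ) * |x i - c| := fun i => by ring
        simp_rw [hterm]
        rw [← Finset.mul_sum]
      linarith
    have hsum_nonneg : 0 ≤ ∑ i, |x i - c| := Finset.sum_nonneg fun i _ => abs_nonneg _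
    have key : (1/2) * pairSum n x + α * ∑ i, Ufun a b (x i) ≤
        ((n:ℝ) - 1) / 2 * ∑ i, |x i - c| +
          α * (-(1/2) * ∑ i, |x i - c| + n * ((b - a) / 8)) := by
      have hh := mul_le_mul_of_nonneg_left hUsum hα0.le
      linarith
    have expand : -β * (-(1/2) * pairSum n x - α * ∑ i, Ufun a b (x i)) =
        β * ((1/2) * pairSum n x + α * ∑ i, Ufun a b (x i)) := by ring
    rw [expand]
    have h3 := mul_le_mul_of_nonneg_left key hβ.le
    refine h3.trans (le_of_eq ?_)
    have h4 : ∑ i, (-κ * |x i - c|) = -κ * ∑ i, |x i - c| := by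
      rw [Finset.mul_sum]
    rw [h4, hκdef, hK]
    ring
  have hmono : ∫⁻ x : Fin n → ℝ,
      ENNReal.ofReal (rexp (-β * (-(1/2) * pairSum n x - α * ∑ i, Ufun a b (x i)))) ≤
      ∫⁻ x : Fin n → ℝ, ENNReal.ofReal (rexp K) *
        ∏ i, ENNReal.ofReal (rexp (-κ * |x i - c|)) := by
    refine lintegral_mono fun x => ?_
    have h5 : rexp (-β * (-(1/2) * pairSum n x - α * ∑ i, Ufun a b (x i))) ≤
        rexp (K + ∑ i, (-κ * |x i - c|)) := Real.exp_le_exp.2 (hpt x)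
    refine (ENNReal.ofReal_le_ofReal h5).trans (le_of_eq ?_)
    rw [Real.exp_add, Real.exp_sum, ENNReal.ofReal_mul (Real.exp_nonneg _),
      ENNReal.ofReal_prod_of_nonneg fun i _ => Real.exp_nonneg _]
  refine lt_of_le_of_lt hmono ?_
  have hfmeas : ∀ i : Fin n, Measurable fun t : ℝ => ENNReal.ofReal (rexp (-κ * |t - c|)) :=
    fun i => ENNReal.measurable_ofReal.comp
      (Real.continuous_exp.comp ((continuous_const.mul
        ((continuous_id.sub continuous_const).abs))) ).measurable
  have hpmeas : Measurable fun x : Fin n → ℝ =>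
      ∏ i, ENNReal.ofReal (rexp (-κ * |x i - c|)) :=
    Finset.measurable_prod _ fun i _ => (hfmeas i).comp (measurable_pi_apply i)
  rw [lintegral_const_mul _ hpmeas]
  have hpi : (volume : Measure (Fin n → ℝ)) = Measure.pi fun _ => volume :=
    MeasureTheory.volume_pi
  rw [hpi, lintegral_pi_prod n _ (fun _ => inferInstance) _ (fun i => hfmeas i)]
  refine ENNReal.mul_lt_top ENNReal.ofReal_lt_top ?_
  refine ENNReal.prod_lt_top fun i _ => ?_
  exact (integrable_exp_neg_abs hκ c).lintegral_lt_top

lemma measurableSet_strictMono {n : ℕ} : MeasurableSet {x : Fin n → ℝ | StrictMono x} := by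
  have : {x : Fin n → ℝ | StrictMono x} =
      ⋂ (i : Fin n) (j : Fin n) (_ : i < j), {x : Fin n → ℝ | x i < x j} := by
    ext x
    simp only [Set.mem_setOf_eq, Set.mem_iInter]
    exact ⟨fun h i j hij => h hij, fun h a b hab => h a b hab⟩
  rw [this]
  exact MeasurableSet.iInter fun i => MeasurableSet.iInter fun j => MeasurableSet.iInter fun _ =>
    measurableSet_lt (measurable_pi_apply i) (measurable_pi_apply j)

lemma map_sortAsc_restrict {n : ℕ} (w : (Fin n → ℝ) → ℝ≥0∞) (hw : Measurable w)
    (hwsymm : ∀ (σ : Equiv.Perm (Fin n)) (x : Fin n → ℝ), w (x ∘ σ) = w x)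
    (E : Set (Fin n → ℝ)) (hE : MeasurableSet E)
    (hEsymm : ∀ σ : Equiv.Perm (Fin n), (fun x : Fin n → ℝ => x ∘ σ) ⁻¹' E = E) :
    Measure.map sortAsc ((volume.withDensity w).restrict E) =
      (n.factorial : ℝ≥0∞) • (volume.withDensity w).restrict (E ∩ {x | StrictMono x}) := by
  set μ := volume.withDensity w with hμ
  set SM := {x : Fin n → ℝ | StrictMono x} with hSM
  -- permutation invariance of μ
  have hperm : ∀ (σ : Equiv.Perm (Fin n)) (s : Set (Fin n → ℝ)), MeasurableSet s →
      μ ((fun x : Fin n → ℝ => x ∘ σ) ⁻¹' s) = μ s := by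
    intro σ s hs
    have hTσ := measurePreserving_comp_perm σ
    rw [hμ, withDensity_apply _ (hs.preimage hTσ.measurable), withDensity_apply _ hs]
    have : ∀ x : Fin n → ℝ, w x = w (x ∘ σ) := fun x => (hwsymm σ x).symm
    calc ∫⁻ x in (fun x : Fin n → ℝ => x ∘ σ) ⁻¹' s, w x ∂volume
        = ∫⁻ x in (fun x : Fin n → ℝ => x ∘ σ) ⁻¹' s, w (x ∘ σ) ∂volume :=
          lintegral_congr fun x => this x
      _ = ∫⁻ x in s, w x ∂volume := hTσ.setLIntegral_comp_preimage hs hw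
  have hμP : μ {x : Fin n → ℝ | ¬ Function.Injective x} = 0 :=
    withDensity_absolutelyContinuous volume w volume_not_injective_null
  refine Measure.ext fun B hB => ?_
  have hsortB : MeasurableSet (sortAsc ⁻¹' B) := hB.preimage measurable_sortAsc
  rw [Measure.map_apply measurable_sortAsc hB, Measure.restrict_apply hsortB]
  rw [Measure.smul_apply, Measure.restrict_apply hB, smul_eq_mul]
  -- A σ pieces
  set A : Equiv.Perm (Fin n) → Set (Fin n → ℝ) :=
    fun σ => (fun x : Fin n → ℝ => x ∘ σ) ⁻¹' SM with hA
  have hAmeas : ∀ σ, MeasurableSet (A σ) :=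
    fun σ => measurableSet_strictMono.preimage (measurePreserving_comp_perm σ).measurable
  have hsort_eq : ∀ (σ : Equiv.Perm (Fin n)) (x : Fin n → ℝ), StrictMono (x ∘ σ) →
      sortAsc x = x ∘ σ := by
    intro σ x hsm
    rw [← sortAsc_perm x σ, sortAsc_of_monotone hsm.monotone]
  have hg : ∀ σ : Equiv.Perm (Fin n),
      sortAsc ⁻¹' B ∩ E ∩ A σ = (fun x : Fin n → ℝ => x ∘ σ) ⁻¹' (SM ∩ E ∩ B) := by
    intro σ
    ext x
    simp only [Set.mem_inter_iff, Set.mem_preimage, hA, hSM, Set.mem_setOf_eq]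
    constructor
    · rintro ⟨⟨hxB, hxE⟩, hsm⟩
      have h1 := hsort_eq σ x hsm
      refine ⟨⟨hsm, ?_⟩, h1 ▸ hxB⟩
      have := hEsymm σ
      rw [← this] at hxE
      exact hxE
    · rintro ⟨⟨hsm, hxE⟩, hxB⟩
      have h1 := hsort_eq σ x hsm
      refine ⟨⟨h1 ▸ hxB, ?_⟩, hsm⟩
      rw [← hEsymm σ]
      exact hxE
  have hdisj : Pairwise (Function.onFun Disjoint fun σ : Equiv.Perm (Fin n) =>
      sortAsc ⁻¹' B ∩ E ∩ A σ) := by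
    intro σ τ hστ
    refine Set.disjoint_left.2 fun x hxσ hxτ => ?_
    have hsmσ : StrictMono (x ∘ σ) := hxσ.2
    have hsmτ : StrictMono (x ∘ τ) := hxτ.2
    have heq : x ∘ σ = x ∘ τ := Tuple.unique_monotone hsmσ.monotone hsmτ.monotone
    have hinj : Function.Injective x := by
      have : Function.Injective (x ∘ σ) := hsmσ.injective
      intro u v huv
      have := this.comp σ.symm.injective
      have h2 : x ∘ σ ∘ σ.symm = x := by funext i; simp
      rw [Function.comp_assoc, h2] at this
      exact this huv
    exact hστ (Equiv.ext fun i => hinj (congrFun heq i))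
  have hcover : (sortAsc ⁻¹' B ∩ E : Set (Fin n → ℝ)) =ᵐ[μ]
      (⋃ σ : Equiv.Perm (Fin n), (sortAsc ⁻¹' B ∩ E ∩ A σ) : Set (Fin n → ℝ)) := by
    have h1 : (sortAsc ⁻¹' B ∩ E) ∩ {x : Fin n → ℝ | Function.Injective x} ⊆
        ⋃ σ : Equiv.Perm (Fin n), (sortAsc ⁻¹' B ∩ E ∩ A σ) := by
      rintro x ⟨⟨hxB, hxE⟩, hinj⟩
      refine Set.mem_iUnion.2 ⟨Tuple.sort x, ⟨hxB, hxE⟩, ?_⟩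
      simp only [hA, Set.mem_preimage, hSM, Set.mem_setOf_eq]
      exact (Tuple.monotone_sort x).strictMono_of_injective
        (hinj.comp (Tuple.sort x).injective)
    have h2 : ⋃ σ : Equiv.Perm (Fin n), (sortAsc ⁻¹' B ∩ E ∩ A σ) ⊆ sortAsc ⁻¹' B ∩ E := by
      refine Set.iUnion_subset fun σ => ?_
      exact fun x hx => hx.1
    rw [Filter.eventuallyEq_set]
    have : ∀ᵐ x ∂μ, Function.Injective x := by
      rw [MeasureTheory.ae_iff]
      simpa using hμP
    filter_upwards [this] with x hx
    constructor
    · intro hxmem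
      exact h1 ⟨hxmem, hx⟩
    · intro hxmem
      exact h2 hxmem
  rw [measure_congr hcover]
  rw [measure_iUnion hdisj (fun σ => (hsortB.inter hE).inter (hAmeas σ))]
  have hval : ∀ σ : Equiv.Perm (Fin n),
      μ (sortAsc ⁻¹' B ∩ E ∩ A σ) = μ (B ∩ (E ∩ SM)) := by
    intro σ
    rw [hg σ, hperm σ _ ((measurableSet_strictMono.inter hE).inter hB)]
    congr 1
    ext x
    simp only [Set.mem_inter_iff, Set.mem_setOf_eq]
    tauto
  simp_rw [hval]
  rw [tsum_fintype, Finset.sum_const, Finset.card_univ, Fintype.card_perm, Fintype.card_fin,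
    nsmul_eq_mul]

/-- **Conditionally Gaussian representation of the uniform jellium.**
Let `ρ` be the uniform probability density on `[a,b]`, `α > n−1`, `β > 0`, and let
`X ∼ P_n` be the jellium Gibbs measure with background `αρ`.  The law of the order
statistics `(X₍n₎, …, X₍₁₎)` conditioned on all particles lying in `[a,b]` equals the law
of `(Y_n, …, Y_1)` conditioned on `a ≤ Y_n ≤ ⋯ ≤ Y_1 ≤ b`, where `Y_1, …, Y_n` are
independent Gaussians with `E[Y_k] = (a+b)/2 + ((b−a)/(2α))(n+1−2k)` and variance
`(b−a)/(αβ)`.  (Below the `j`-th coordinate, `j = 0, …, n−1`, represents `Y_{n−j}`.) -/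
lemma coord_identity {a b α β : ℝ} (hab : a < b) (hα0 : 0 < α) (hβ : 0 < β)
    (n : ℕ) (k : Fin n) (t : ℝ) :
    (β/2) * (2*((k:ℕ):ℝ) + 1 - (n:ℝ)) * t - α*β*((t - a)^2 + (b - t)^2)/(4*(b-a)) =
      (-(α*β*(a^2+b^2))/(4*(b-a)) +
        ((a + b) / 2 + (b - a) / (2 * α) * ((n : ℝ) + 1 - 2 * ((n : ℝ) - ((k : ℕ) : ℝ))))^2 /
          (2*((b - a) / (α * β)))) -
      (t - ((a + b) / 2 + (b - a) / (2 * α) * ((n : ℝ) + 1 - 2 * ((n : ℝ) - ((k : ℕ) : ℝ)))))^2 /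
        (2*((b - a) / (α * β))) := by
  have h1 : b - a ≠ 0 := by linarith
  have h2 : α ≠ 0 := ne_of_gt hα0
  have h3 : β ≠ 0 := ne_of_gt hβ
  field_simp
  ring

theorem uniform_jellium_conditionally_gaussian
    (n : ℕ) (a b α β : ℝ) (hab : a < b) (hα : (n : ℝ) - 1 < α) (hα0 : 0 < α) (hβ : 0 < β)
    (ρ : ℝ → ℝ) (hρ : ρ = Set.indicator (Set.Icc a b) fun _ => 1 / (b - a)) :
    Measure.map sortAsc
        ((gibbs n β (jelliumH n α ρ))[|{x | ∀ i, x i ∈ Set.Icc a b}]) =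
      (Measure.pi fun j : Fin n =>
          gaussianReal ((a + b) / 2 + (b - a) / (2 * α) * ((n : ℝ) + 1 - 2 * ((n : ℝ) - (j : ℕ))))
            (Real.toNNReal ((b - a) / (α * β))))[|{y | Monotone y ∧ ∀ j, y j ∈ Set.Icc a b}] := by

  -- identify the Hamiltonian with its explicit form
  have hU : coulombU ρ = Ufun a b := by
    rw [hρ, coulombU_eq hab]; rfl
  have hH : jelliumH n α ρ = fun x => -(1/2) * pairSum n x - α * ∑ i, Ufun a b (x i) := by
    funext x
    unfold jelliumH
    rw [hU]
  rw [hH]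
  -- basic notation
  set w : (Fin n → ℝ) → ℝ≥0∞ := fun x =>
    ENNReal.ofReal (rexp (-β * (-(1/2) * pairSum n x - α * ∑ i, Ufun a b (x i)))) with hw
  set μ : Measure (Fin n → ℝ) := volume.withDensity w with hμ
  set Z : ℝ≥0∞ := ∫⁻ x, w x with hZ
  set E : Set (Fin n → ℝ) := {x | ∀ i, x i ∈ Set.Icc a b} with hE
  set S : Set (Fin n → ℝ) := {y | Monotone y ∧ ∀ j, y j ∈ Set.Icc a b} with hS
  set m : Fin n → ℝ := fun j =>
    (a + b) / 2 + (b - a) / (2 * α) * ((n : ℝ) + 1 - 2 * ((n : ℝ) - (j : ℕ))) with hm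
  set v : ℝ≥0 := Real.toNNReal ((b - a) / (α * β)) with hvdef
  set ν : Measure (Fin n → ℝ) := Measure.pi fun j => gaussianReal (m j) v with hν
  have hvr_pos : 0 < (b - a) / (α * β) := div_pos (by linarith) (by positivity)
  have hv0 : v ≠ 0 := by
    rw [hvdef, ← Real.toNNReal_zero, ne_eq, Real.toNNReal_eq_toNNReal_iff hvr_pos.le le_rfl]
    exact ne_of_gt hvr_pos
  have hvr : (v : ℝ) = (b - a) / (α * β) := Real.coe_toNNReal _ hvr_pos.le
  have hvpos : 0 < (v : ℝ) := by rw [hvr]; exact hvr_pos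
  -- continuity and measurability
  have hUcont : Continuous (Ufun a b) := by
    unfold Ufun
    exact (((continuous_id.sub continuous_const).mul
      (continuous_id.sub continuous_const).abs).add
      ((continuous_const.sub continuous_id).mul
        (continuous_const.sub continuous_id).abs)).div_const _ |>.neg
  have hHcont : Continuous (fun x : Fin n → ℝ => -(1/2) * pairSum n x - α * ∑ i, Ufun a b (x i)) := by
    refine Continuous.sub (continuous_const.mul ?_) (continuous_const.mul ?_)
    · exact continuous_finset_sum _ fun p _ => ((continuous_apply p.1).sub (continuous_apply p.2)).abs
    · exact continuous_finset_sum _ fun i _ => hUcont.comp (continuous_apply i)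
  have hwmeas : Measurable w :=
    ENNReal.measurable_ofReal.comp (Real.continuous_exp.comp (continuous_const.mul hHcont)).measurable
  have hwsymm : ∀ (σ : Equiv.Perm (Fin n)) (x : Fin n → ℝ), w (x ∘ σ) = w x := by
    intro σ x
    rw [hw]
    simp only
    rw [pairSum_perm x σ]
    have h2 : ∑ i, Ufun a b ((x ∘ σ) i) = ∑ i, Ufun a b (x i) := by
      simpa [Function.comp] using Equiv.sum_comp σ (fun i => Ufun a b (x i))
    rw [h2]
  have hEmeas : MeasurableSet E := by
    have : E = ⋂ i, (fun x : Fin n → ℝ => x i) ⁻¹' (Set.Icc a b) := by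
      ext x; simp [hE]
    rw [this]
    exact MeasurableSet.iInter fun i => (measurable_pi_apply i) measurableSet_Icc
  have hEsymm : ∀ σ : Equiv.Perm (Fin n), (fun x : Fin n → ℝ => x ∘ σ) ⁻¹' E = E := by
    intro σ
    ext x
    simp only [hE, Set.mem_preimage, Set.mem_setOf_eq, Function.comp_apply]
    constructor
    · intro h i
      have := h (σ.symm i)
      simpa using this
    · intro h i
      exact h (σ i)
  have hMonoMeas : MeasurableSet {y : Fin n → ℝ | Monotone y} := by
    have : {y : Fin n → ℝ | Monotone y} =
        ⋂ (i : Fin n) (j : Fin n) (_ : i ≤ j), {y : Fin n → ℝ | y i ≤ y j} := by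
      ext y
      simp only [Set.mem_setOf_eq, Set.mem_iInter]
      exact ⟨fun h i j hij => h hij, fun h i j hij => h i j hij⟩
    rw [this]
    exact MeasurableSet.iInter fun i => MeasurableSet.iInter fun j => MeasurableSet.iInter fun _ =>
      measurableSet_le (measurable_pi_apply i) (measurable_pi_apply j)
  have hSmeas : MeasurableSet S := by
    have : S = {y : Fin n → ℝ | Monotone y} ∩ E := by
      ext y; simp [hS, hE]
    rw [this]
    exact hMonoMeas.inter hEmeas
  -- Z is positive and finite
  have hZtop : Z ≠ ∞ := (Z_lt_top hab hα hα0 hβ).ne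
  have hZ0 : Z ≠ 0 := by
    rw [hZ, ← pos_iff_ne_zero, lintegral_pos_iff_support hwmeas]
    have hsupp : Function.support w = Set.univ := by
      ext x
      simp only [Function.mem_support, Set.mem_univ, iff_true, hw]
      exact ne_of_gt (ENNReal.ofReal_pos.2 (Real.exp_pos _))
    rw [hsupp]
    have h1 : (volume : Measure (Fin n → ℝ)) Set.univ ≠ 0 := by
      rw [MeasureTheory.volume_pi, Measure.pi_univ]
      simp [Real.volume_univ]
    exact pos_iff_ne_zero.2 h1
  -- the pushforward identity
  have key4 := map_sortAsc_restrict w hwmeas hwsymm E hEmeas hEsymm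
  -- replace strict monotonicity by monotonicity
  have hES : μ.restrict (E ∩ {x | StrictMono x}) = μ.restrict S := by
    refine Measure.restrict_congr_set ?_
    rw [MeasureTheory.ae_eq_set]
    constructor
    · have : (E ∩ {x : Fin n → ℝ | StrictMono x}) \ S = ∅ := by
        rw [Set.diff_eq_empty]
        rintro x ⟨hxE, hxSM⟩
        exact ⟨hxSM.monotone, hxE⟩
      rw [this]; simp
    · refine measure_mono_null ?_
        (withDensity_absolutelyContinuous volume w volume_not_injective_null)
      rintro y ⟨⟨hymono, hyE⟩, hynot⟩
      simp only [Set.mem_setOf_eq]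
      intro hinj
      exact hynot ⟨hyE, hymono.strictMono_of_injective hinj⟩
  -- Gaussian product as density
  have hGmeas : Measurable (fun y : Fin n → ℝ => ∏ j, gaussianPDF (m j) v (y j)) :=
    Finset.measurable_prod _ fun j _ =>
      (measurable_gaussianPDF (m j) v).comp (measurable_pi_apply j)
  have hνdens : ν = volume.withDensity (fun y => ∏ j, gaussianPDF (m j) v (y j)) := by
    rw [hν, MeasureTheory.volume_pi]
    exact pi_withDensity (fun _ => volume) (fun j => gaussianPDF (m j) v)
      (fun j => measurable_gaussianPDF _ _) _
      (fun j => gaussianReal_of_var_ne_zero (m j) hv0)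
  -- pointwise identification of the density on S
  set cst : Fin n → ℝ := fun k => -(α*β*(a^2+b^2))/(4*(b-a)) + (m k)^2/(2*((b-a)/(α*β))) with hcst
  set C : ℝ≥0∞ := ∏ k : Fin n, ENNReal.ofReal (rexp (cst k) * Real.sqrt (2*π*(v:ℝ))) with hC
  have hsqrt_pos : 0 < Real.sqrt (2*π*(v:ℝ)) :=
    Real.sqrt_pos.2 (by positivity)
  have hC0 : C ≠ 0 := by
    rw [hC]
    refine Finset.prod_ne_zero_iff.2 fun k _ => ?_
    exact ne_of_gt (ENNReal.ofReal_pos.2 (mul_pos (Real.exp_pos _) hsqrt_pos))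
  have hCtop : C ≠ ∞ := by
    rw [hC]
    exact (ENNReal.prod_lt_top fun k _ => ENNReal.ofReal_lt_top).ne
  have hdens : ∀ y ∈ S, w y = C * ∏ j, gaussianPDF (m j) v (y j) := by
    intro y hy
    obtain ⟨hymono, hyIcc⟩ := hy
    have hUy : ∀ i : Fin n, Ufun a b (y i) = -(((y i - a)^2 + (b - y i)^2) / (4*(b-a))) := by
      intro i
      obtain ⟨h1, h2⟩ := hyIcc i
      rw [Ufun, abs_of_nonneg (by linarith), abs_of_nonneg (by linarith)]
      ring_nf
    have hsum : -β * (-(1/2) * pairSum n y - α * ∑ i, Ufun a b (y i)) =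
        ∑ k : Fin n, ((β/2) * (2*((k:ℕ):ℝ) + 1 - (n:ℝ)) * y k -
          α*β*((y k - a)^2 + (b - y k)^2)/(4*(b-a))) := by
      have hrhs : ∑ k : Fin n, ((β/2) * (2*((k:ℕ):ℝ) + 1 - (n:ℝ)) * y k -
          α*β*((y k - a)^2 + (b - y k)^2)/(4*(b-a))) =
          (β/2) * ∑ k : Fin n, (2*((k:ℕ):ℝ) + 1 - (n:ℝ)) * y k +
            α*β*∑ k : Fin n, Ufun a b (y k) := by
        rw [Finset.mul_sum, Finset.mul_sum, ← Finset.sum_add_distrib]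
        refine Finset.sum_congr rfl fun k _ => ?_
        rw [hUy k]
        ring
      rw [hrhs, ← pairSum_monotone hymono]
      ring
    have hterm : ∀ k : Fin n,
        rexp ((β/2) * (2*((k:ℕ):ℝ) + 1 - (n:ℝ)) * y k -
          α*β*((y k - a)^2 + (b - y k)^2)/(4*(b-a))) =
        (rexp (cst k) * Real.sqrt (2*π*(v:ℝ))) * gaussianPDFReal (m k) v (y k) := by
      intro k
      have h1' : (β/2) * (2*((k:ℕ):ℝ) + 1 - (n:ℝ)) * y k -
          α*β*((y k - a)^2 + (b - y k)^2)/(4*(b-a)) =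
          cst k - (y k - m k)^2/(2*(v:ℝ)) := by
        rw [hcst]
        simp only []
        rw [hm]
        simp only []
        rw [hvr]
        exact coord_identity hab hα0 hβ n k (y k)
      rw [h1', gaussianPDFReal]
      have hBB : -(y k - m k)^2 / (2*(v:ℝ)) = -((y k - m k)^2 / (2*(v:ℝ))) := by ring
      rw [hBB, Real.exp_neg, Real.exp_sub]
      field_simp
    have hy_w : w y = ENNReal.ofReal (∏ k : Fin n,
        ((rexp (cst k) * Real.sqrt (2*π*(v:ℝ))) * gaussianPDFReal (m k) v (y k))) := by
      rw [hw]
      simp only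
      rw [hsum, Real.exp_sum]
      congr 1
      exact Finset.prod_congr rfl fun k _ => hterm k
    rw [hy_w, ENNReal.ofReal_prod_of_nonneg (fun k _ =>
      mul_nonneg (mul_nonneg (Real.exp_nonneg _) hsqrt_pos.le) (gaussianPDFReal_nonneg _ _ _))]
    rw [hC]
    rw [← Finset.prod_mul_distrib]
    refine Finset.prod_congr rfl fun k _ => ?_
    rw [ENNReal.ofReal_mul (mul_nonneg (Real.exp_nonneg _) hsqrt_pos.le)]
    rfl
  -- measure-level density identification on S
  have hrestr : μ.restrict S = C • ν.restrict S := by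
    rw [hμ, hνdens, restrict_withDensity hSmeas, restrict_withDensity hSmeas]
    rw [← withDensity_smul C hGmeas]
    refine withDensity_congr_ae ?_
    refine (ae_restrict_iff' hSmeas).2 (ae_of_all _ fun y hy => ?_)
    rw [hdens y hy]
    rfl
  -- ν S is positive and finite
  haveI hνprob : IsProbabilityMeasure ν := by
    rw [hν]; infer_instance
  have hνStop : ν S ≠ ∞ := (measure_lt_top ν S).ne
  have hνS0 : ν S ≠ 0 := by
    set δ : ℝ := (b - a) / (n + 1) with hδ
    have hδpos : 0 < δ := div_pos (by linarith) (by positivity)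
    have hbox : (Set.univ.pi fun j : Fin n => Set.Ioo (a + (j:ℕ)*δ) (a + ((j:ℕ)+1)*δ)) ⊆ S := by
      intro y hy
      simp only [Set.mem_pi, Set.mem_univ, forall_true_left, Set.mem_Ioo] at hy
      constructor
      · intro j k hjk
        rcases eq_or_lt_of_le hjk with heq | hlt
        · rw [heq]
        · have hjk' : ((j:ℕ):ℝ) + 1 ≤ ((k:ℕ):ℝ) := by
            have : (j:ℕ) + 1 ≤ (k:ℕ) := hlt
            exact_mod_cast this
          have h1 := (hy j).2
          have h2 := (hy k).1
          have h3 : a + ((j:ℕ)+1)*δ ≤ a + (k:ℕ)*δ := by nlinarith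
          linarith
      · intro j
        have h1 := (hy j).1
        have h2 := (hy j).2
        have hj1 : ((j:ℕ):ℝ) + 1 ≤ (n:ℝ) := by exact_mod_cast j.isLt
        constructor
        · have : (0:ℝ) ≤ (j:ℕ) * δ := mul_nonneg (Nat.cast_nonneg _) hδpos.le
          linarith
        · have h3 : a + ((j:ℕ)+1)*δ ≤ a + n*δ := by nlinarith
          have h4 : a + (n:ℝ)*δ ≤ b := by
            have h6 : ((n:ℝ)+1)*δ = b - a := by
              rw [hδ]; field_simp
            nlinarith [hδpos.le]
          linarith
    intro hνS
    have h0 : ν (Set.univ.pi fun j : Fin n => Set.Ioo (a + (j:ℕ)*δ) (a + ((j:ℕ)+1)*δ)) = 0 :=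
      measure_mono_null hbox hνS
    rw [hν, Measure.pi_pi] at h0
    obtain ⟨j, _, hj0⟩ := Finset.prod_eq_zero_iff.1 h0
    have habs := gaussianReal_absolutelyContinuous' (m j) hv0
    have : (volume : Measure ℝ) (Set.Ioo (a + (j:ℕ)*δ) (a + ((j:ℕ)+1)*δ)) = 0 := habs hj0
    rw [Real.volume_Ioo] at this
    have harg : a + ((j:ℕ)+1)*δ - (a + (j:ℕ)*δ) = δ := by ring
    rw [harg] at this
    exact (ne_of_gt (ENNReal.ofReal_pos.2 hδpos)) this
  -- total masses
  have hfC0 : (n.factorial : ℝ≥0∞) * C ≠ 0 :=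
    mul_ne_zero (Nat.cast_ne_zero.2 n.factorial_ne_zero) hC0
  have hfCtop : (n.factorial : ℝ≥0∞) * C ≠ ∞ :=
    ENNReal.mul_ne_top (ENNReal.natCast_ne_top _) hCtop
  have hT : Measure.map sortAsc (μ.restrict E) = ((n.factorial : ℝ≥0∞) * C) • ν.restrict S := by
    rw [key4, hES, hrestr, smul_smul]
  have hμE : μ E = (n.factorial : ℝ≥0∞) * C * ν S := by
    have h1 : μ E = Measure.map sortAsc (μ.restrict E) Set.univ := by
      rw [Measure.map_apply measurable_sortAsc MeasurableSet.univ, Set.preimage_univ,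
        Measure.restrict_apply MeasurableSet.univ, Set.univ_inter]
    rw [h1, hT, Measure.smul_apply, Measure.restrict_apply MeasurableSet.univ, Set.univ_inter,
      smul_eq_mul]
  have hμEtop : μ E ≠ ∞ := by
    rw [hμE]
    exact ENNReal.mul_ne_top hfCtop hνStop
  have hμE0 : μ E ≠ 0 := by
    rw [hμE]
    exact mul_ne_zero hfC0 hνS0
  -- final assembly
  have hgibbs : gibbs n β (fun x => -(1/2) * pairSum n x - α * ∑ i, Ufun a b (x i)) = Z⁻¹ • μ := rfl
  rw [hgibbs]
  have hcond1 : (Z⁻¹ • μ)[|E] = ((Z⁻¹ * μ E)⁻¹ * Z⁻¹) • μ.restrict E := by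
    show ((Z⁻¹ • μ) E)⁻¹ • (Z⁻¹ • μ).restrict E = _
    rw [Measure.smul_apply, smul_eq_mul, Measure.restrict_smul, smul_smul]
  have hcoeff : (Z⁻¹ * μ E)⁻¹ * Z⁻¹ = (μ E)⁻¹ := by
    rw [ENNReal.mul_inv (Or.inl (ENNReal.inv_ne_zero.2 hZtop)) (Or.inl (ENNReal.inv_ne_top.2 hZ0)),
      inv_inv]
    calc Z * (μ E)⁻¹ * Z⁻¹ = (μ E)⁻¹ * (Z * Z⁻¹) := by ring
    _ = (μ E)⁻¹ := by rw [ENNReal.mul_inv_cancel hZ0 hZtop, mul_one]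
  rw [hcond1, hcoeff, Measure.map_smul, hT, smul_smul]
  have hfinal : (μ E)⁻¹ * ((n.factorial : ℝ≥0∞) * C) = (ν S)⁻¹ := by
    rw [hμE, ENNReal.mul_inv (Or.inl hfC0) (Or.inl hfCtop)]
    calc ((n.factorial : ℝ≥0∞) * C)⁻¹ * (ν S)⁻¹ * ((n.factorial : ℝ≥0∞) * C)
        = (ν S)⁻¹ * (((n.factorial : ℝ≥0∞) * C)⁻¹ * ((n.factorial : ℝ≥0∞) * C)) := by ring
    _ = (ν S)⁻¹ := by rw [ENNReal.inv_mul_cancel hfC0 hfCtop, mul_one]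
  rw [hfinal]
  rfl
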